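/- arXiv:2605.09119 — 2 statements merged into one kernel-verified Lean document; each statement's English description precedes it below -/
import Mathlib

section
/- Fix score vectors u, v ∈ ℝ^K with all coordinates in [−B, B], and let p_u = softmax(u), p_v = softmax(v). Then KL(p_u ‖ p_v) ≥ (e^{−2B}/2) · Var_{k∼Unif(1,…,K)}(δ_k), where δ_k = v_k − u_k and the variance is with respect to the uniform distribution on coordinates. -/
open scoped BigOperators

noncomputable def softmax {K : ℕ} (z : Fin K → ℝ) : Fin K → ℝ :=
  fun k => Real.exp (z k) / ∑ j, Real.exp (z j)

noncomputable def klFin {K : ℕ} (p q : Fin K → ℝ) : ℝ :=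
  ∑ k, p k * Real.log (p k / q k)

/-- Second-order Taylor lower bound: if `g'' ≥ m` on `[0,1]` then
`g 1 ≥ g 0 + g' 0 + m/2`. -/
lemma taylor2_aux {g g1 g2 : ℝ → ℝ} (h1 : ∀ t, HasDerivAt g (g1 t) t)
    (h2 : ∀ t, HasDerivAt g1 (g2 t) t) {m : ℝ}
    (hm : ∀ t ∈ Set.Icc (0:ℝ) 1, m ≤ g2 t) :
    g 0 + g1 0 + m / 2 ≤ g 1 := by
  set φ : ℝ → ℝ := fun t => g1 t - g1 0 - m * t with hφdef
  have hφ : ∀ t, HasDerivAt φ (g2 t - m) t := by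
    intro t
    simpa using ((h2 t).sub_const (g1 0)).fun_sub ((hasDerivAt_id t).const_mul m)
  have hφmono : MonotoneOn φ (Set.Icc 0 1) := by
    apply monotoneOn_of_deriv_nonneg (convex_Icc 0 1)
    · exact Continuous.continuousOn (by
        exact continuous_iff_continuousAt.2 fun t => (hφ t).continuousAt)
    · exact fun t ht => ((hφ t).differentiableAt).differentiableWithinAt
    · intro t ht
      rw [(hφ t).deriv]
      rw [interior_Icc] at ht
      have := hm t ⟨le_of_lt ht.1, le_of_lt ht.2⟩
      linarith
  have hφ0 : φ 0 = 0 := by simp [hφdef]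
  have hφnn : ∀ t ∈ Set.Icc (0:ℝ) 1, 0 ≤ φ t := by
    intro t ht
    have := hφmono (Set.left_mem_Icc.2 zero_le_one) ht ht.1
    rw [hφ0] at this; exact this
  set ψ : ℝ → ℝ := fun t => g t - g 0 - g1 0 * t - m * t ^ 2 / 2 with hψdef
  have hψ : ∀ t, HasDerivAt ψ (φ t) t := by
    intro t
    have : HasDerivAt (fun t : ℝ => m * t ^ 2 / 2) (m * t) t := by
      have := ((hasDerivAt_pow 2 t).const_mul m).div_const 2
      simpa using this.congr_deriv (by ring)
    have h := (((h1 t).sub_const (g 0)).fun_sub ((hasDerivAt_id t).const_mul (g1 0))).fun_sub this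
    simpa [hφdef] using h.congr_deriv (by ring)
  have hψmono : MonotoneOn ψ (Set.Icc 0 1) := by
    apply monotoneOn_of_deriv_nonneg (convex_Icc 0 1)
    · exact Continuous.continuousOn (by
        exact continuous_iff_continuousAt.2 fun t => (hψ t).continuousAt)
    · exact fun t ht => ((hψ t).differentiableAt).differentiableWithinAt
    · intro t ht
      rw [(hψ t).deriv]
      rw [interior_Icc] at ht
      exact hφnn t ⟨le_of_lt ht.1, le_of_lt ht.2⟩
  have := hψmono (Set.left_mem_Icc.2 zero_le_one) (Set.right_mem_Icc.2 zero_le_one) zero_le_one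
  simp only [hψdef] at this
  norm_num at this
  linarith

/-- Variance comparison: a variance under weights bounded below by `c`
dominates `c` times the centered sum of squares. -/
lemma var_bound_aux {K : ℕ} (hK : 0 < K) (p δ : Fin K → ℝ) (c : ℝ) (hc : 0 ≤ c)
    (hp1 : ∑ k, p k = 1) (hpc : ∀ k, c ≤ p k) :
    c * (∑ k, (δ k) ^ 2 - (∑ k, δ k) ^ 2 / K) ≤
      ∑ k, p k * (δ k) ^ 2 - (∑ k, p k * δ k) ^ 2 := by
  set m : ℝ := ∑ k, p k * δ k with hm
  set A : ℝ := ∑ k, δ k with hA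
  set Q : ℝ := ∑ k, (δ k) ^ 2 with hQ
  have e1 : ∑ k, p k * (δ k - m) ^ 2 = (∑ k, p k * (δ k) ^ 2) - m ^ 2 := by
    have : ∀ k : Fin K, p k * (δ k - m) ^ 2
        = p k * (δ k) ^ 2 - 2 * m * (p k * δ k) + m ^ 2 * p k := fun k => by ring
    rw [Finset.sum_congr rfl fun k _ => this k]
    rw [Finset.sum_add_distrib, Finset.sum_sub_distrib, ← Finset.mul_sum, ← Finset.mul_sum,
      hp1, ← hm]
    ring
  have e2 : ∑ k, (δ k - m) ^ 2 = Q - 2 * m * A + K * m ^ 2 := by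
    have : ∀ k : Fin K, (δ k - m) ^ 2 = (δ k) ^ 2 - 2 * m * δ k + m ^ 2 := fun k => by ring
    rw [Finset.sum_congr rfl fun k _ => this k]
    rw [Finset.sum_add_distrib, Finset.sum_sub_distrib, ← Finset.mul_sum,
      Finset.sum_const, Finset.card_fin]
    ring
  have step1 : c * ∑ k, (δ k - m) ^ 2 ≤ ∑ k, p k * (δ k - m) ^ 2 := by
    rw [Finset.mul_sum]
    exact Finset.sum_le_sum fun k _ =>
      mul_le_mul_of_nonneg_right (hpc k) (sq_nonneg _)
  have hKpos : (0:ℝ) < K := by exact_mod_cast hK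
  have step2 : Q - A ^ 2 / K ≤ Q - 2 * m * A + K * m ^ 2 := by
    have h : 2 * m * A - (K:ℝ) * m ^ 2 ≤ A ^ 2 / K := by
      rw [le_div_iff₀ hKpos]; nlinarith [sq_nonneg ((K:ℝ) * m - A)]
    linarith
  calc c * (Q - A ^ 2 / K) ≤ c * (Q - 2 * m * A + K * m ^ 2) :=
        mul_le_mul_of_nonneg_left step2 hc
    _ = c * ∑ k, (δ k - m) ^ 2 := by rw [e2]
    _ ≤ ∑ k, p k * (δ k - m) ^ 2 := step1
    _ = _ := by rw [e1]

theorem stmt_3 {K : ℕ} (hK : 2 ≤ K) (B : ℝ) (hB : 0 ≤ B)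
    (u v : Fin K → ℝ)
    (hu : ∀ k, |u k| ≤ B) (hv : ∀ k, |v k| ≤ B) :
    (Real.exp (-(2 * B)) / 2) *
        ((1 / (K : ℝ)) * ∑ k, (v k - u k) ^ 2
          - ((1 / (K : ℝ)) * ∑ k, (v k - u k)) ^ 2)
      ≤ klFin (softmax u) (softmax v) := by
  have hKpos : 0 < K := by omega
  have hKR : (0:ℝ) < K := by exact_mod_cast hKpos
  haveI : Nonempty (Fin K) := ⟨⟨0, hKpos⟩⟩
  set δ : Fin K → ℝ := fun k => v k - u k with hδ
  set S : ℝ → ℝ := fun t => ∑ k, Real.exp (u k + t * δ k) with hS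
  set S1 : ℝ → ℝ := fun t => ∑ k, Real.exp (u k + t * δ k) * δ k with hS1
  set S2 : ℝ → ℝ := fun t => ∑ k, Real.exp (u k + t * δ k) * δ k * δ k with hS2
  have hSpos : ∀ t, 0 < S t := fun t =>
    Finset.sum_pos (fun k _ => Real.exp_pos _) Finset.univ_nonempty
  have hlin : ∀ (k : Fin K) (t : ℝ), HasDerivAt (fun t => u k + t * δ k) (δ k) t := by
    intro k t
    simpa using (hasDerivAt_mul_const (δ k)).const_add (u k)
  have hdS : ∀ t, HasDerivAt S (S1 t) t := fun t =>
    HasDerivAt.fun_sum fun k _ => ((hlin k t).exp)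
  have hdS1 : ∀ t, HasDerivAt S1 (S2 t) t := fun t =>
    HasDerivAt.fun_sum fun k _ => by
      simpa [mul_comm, mul_assoc] using ((hlin k t).exp).mul_const (δ k)
  set g : ℝ → ℝ := fun t => Real.log (S t) with hg
  set g1 : ℝ → ℝ := fun t => S1 t / S t with hg1
  set g2 : ℝ → ℝ := fun t => (S2 t * S t - S1 t * S1 t) / (S t) ^ 2 with hg2
  have hdg : ∀ t, HasDerivAt g (g1 t) t := fun t => (hdS t).log (ne_of_gt (hSpos t))
  have hdg1 : ∀ t, HasDerivAt g1 (g2 t) t := fun t =>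
    (hdS1 t).div (hdS t) (ne_of_gt (hSpos t))
  -- the lower bound on g2 on [0,1]
  set m : ℝ := Real.exp (-(2 * B)) *
      ((1 / (K : ℝ)) * ∑ k, δ k ^ 2 - ((1 / (K : ℝ)) * ∑ k, δ k) ^ 2) with hmdef
  have hg2bound : ∀ t ∈ Set.Icc (0:ℝ) 1, m ≤ g2 t := by
    intro t ht
    obtain ⟨ht0, ht1⟩ := ht
    set p : Fin K → ℝ := fun k => Real.exp (u k + t * δ k) / S t with hp
    have hrange : ∀ k, -B ≤ u k + t * δ k ∧ u k + t * δ k ≤ B := by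
      intro k
      have h1 := abs_le.1 (hu k)
      have h2 := abs_le.1 (hv k)
      have hδk : δ k = v k - u k := rfl
      constructor
      · nlinarith [mul_nonneg ht0 (by linarith [h2.1] : (0:ℝ) ≤ v k + B),
          mul_nonneg (by linarith : (0:ℝ) ≤ 1 - t) (by linarith [h1.1] : (0:ℝ) ≤ u k + B)]
      · nlinarith [mul_nonneg ht0 (by linarith [h2.2] : (0:ℝ) ≤ B - v k),
          mul_nonneg (by linarith : (0:ℝ) ≤ 1 - t) (by linarith [h1.2] : (0:ℝ) ≤ B - u k)]
    have hSle : S t ≤ K * Real.exp B := by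
      calc S t ≤ ∑ _k : Fin K, Real.exp B :=
            Finset.sum_le_sum fun k _ => Real.exp_le_exp.2 (hrange k).2
        _ = K * Real.exp B := by simp [Finset.sum_const, Finset.card_fin, mul_comm]
    set c : ℝ := Real.exp (-(2 * B)) / K with hc
    have hcpos : 0 < c := by positivity
    have hpc : ∀ k, c ≤ p k := by
      intro k
      have hnum : Real.exp (-B) ≤ Real.exp (u k + t * δ k) :=
        Real.exp_le_exp.2 (hrange k).1
      have hKexp : (0:ℝ) < K * Real.exp B := by positivity
      have : Real.exp (-B) / (K * Real.exp B) ≤ Real.exp (u k + t * δ k) / S t :=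
        div_le_div₀ (le_of_lt (Real.exp_pos _)) hnum (hSpos t) hSle
      calc c = Real.exp (-B) / (K * Real.exp B) := by
            have he : Real.exp (-(2 * B)) = Real.exp (-B) / Real.exp B := by
              rw [← Real.exp_sub]; ring_nf
            rw [hc, he, div_div, mul_comm]
        _ ≤ p k := this
    have hp1 : ∑ k, p k = 1 := by
      rw [hp]
      rw [← Finset.sum_div]
      exact div_self (ne_of_gt (hSpos t))
    have hvb := var_bound_aux hKpos p δ c (le_of_lt hcpos) hp1 hpc
    have hgid : g2 t = ∑ k, p k * (δ k) ^ 2 - (∑ k, p k * δ k) ^ 2 := by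
      have hA : ∑ k, p k * δ k = S1 t / S t := by
        rw [hS1, Finset.sum_div]
        exact Finset.sum_congr rfl fun k _ => by rw [hp]; ring
      have hQ : ∑ k, p k * (δ k) ^ 2 = S2 t / S t := by
        rw [hS2, Finset.sum_div]
        exact Finset.sum_congr rfl fun k _ => by rw [hp]; ring
      rw [hA, hQ, hg2]
      field_simp
    rw [hgid]
    have hmc : m = c * (∑ k, δ k ^ 2 - (∑ k, δ k) ^ 2 / K) := by
      rw [hmdef, hc]; field_simp
    rw [hmc]; exact hvb
  have htay := taylor2_aux hdg hdg1 hg2bound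
  -- identify endpoints
  have hS0 : S 0 = ∑ k, Real.exp (u k) := by
    rw [hS]; exact Finset.sum_congr rfl fun k _ => by norm_num
  have hS10 : S1 0 = ∑ k, Real.exp (u k) * δ k := by
    rw [hS1]; exact Finset.sum_congr rfl fun k _ => by norm_num
  have hS1v : S 1 = ∑ k, Real.exp (v k) := by
    rw [hS]; exact Finset.sum_congr rfl fun k _ => by rw [hδ]; ring_nf
  have hZu : (0:ℝ) < ∑ k, Real.exp (u k) :=
    Finset.sum_pos (fun k _ => Real.exp_pos _) Finset.univ_nonempty
  have hZv : (0:ℝ) < ∑ k, Real.exp (v k) :=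
    Finset.sum_pos (fun k _ => Real.exp_pos _) Finset.univ_nonempty
  -- KL identity
  have hsum1 : ∑ k, softmax u k = 1 := by
    unfold softmax
    rw [← Finset.sum_div, div_self (ne_of_gt hZu)]
  have hg1id : g1 0 = ∑ k, softmax u k * δ k := by
    simp only [hg1]
    rw [hS10, hS0, Finset.sum_div]
    exact Finset.sum_congr rfl fun k _ => by unfold softmax; ring
  have hterm : ∀ k : Fin K, softmax u k * Real.log (softmax u k / softmax v k)
      = -(softmax u k * δ k) + softmax u k *
          (Real.log (∑ j, Real.exp (v j)) - Real.log (∑ j, Real.exp (u j))) := by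
    intro k
    have h1 : Real.log (softmax u k) = u k - Real.log (∑ j, Real.exp (u j)) := by
      unfold softmax; rw [Real.log_div (Real.exp_ne_zero _) (ne_of_gt hZu), Real.log_exp]
    have h2 : Real.log (softmax v k) = v k - Real.log (∑ j, Real.exp (v j)) := by
      unfold softmax; rw [Real.log_div (Real.exp_ne_zero _) (ne_of_gt hZv), Real.log_exp]
    have hpu : softmax u k ≠ 0 := ne_of_gt (div_pos (Real.exp_pos _) hZu)
    have hpv : softmax v k ≠ 0 := ne_of_gt (div_pos (Real.exp_pos _) hZv)
    rw [Real.log_div hpu hpv, h1, h2]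
    have hδk : δ k = v k - u k := rfl
    rw [hδk]; ring
  have hkl : klFin (softmax u) (softmax v) = g 1 - g 0 - g1 0 := by
    have hgv1 : g 1 = Real.log (∑ k, Real.exp (v k)) := by
      simp only [hg]; rw [hS1v]
    have hgv0 : g 0 = Real.log (∑ k, Real.exp (u k)) := by
      simp only [hg]; rw [hS0]
    rw [klFin, Finset.sum_congr rfl fun k _ => hterm k, Finset.sum_add_distrib,
      Finset.sum_neg_distrib, ← Finset.sum_mul, hsum1, one_mul, hgv1, hgv0, hg1id]
    ring
  have hfin : Real.exp (-(2 * B)) / 2 *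
      ((1 / (K : ℝ)) * ∑ k, δ k ^ 2 - ((1 / (K : ℝ)) * ∑ k, δ k) ^ 2) = m / 2 := by
    rw [hmdef]; ring
  rw [hkl]
  linarith [htay, hfin.le, hfin.ge]
end

section
/- Fix a probability measure q on an action space and a bounded measurable function Δ with |Δ| ≤ 2B under q. Sample A₁,…,A_K i.i.d. from q, and let u_k = S*(A_k), v_k = S(A_k) where S* and S are scores bounded by B so that Δ = S − S*. Then E[KL(softmax(u) ‖ softmax(v))] ≥ (e^{−2B}/2)·((K−1)/K)·Var_{A∼q}(Δ(A)). -/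
open MeasureTheory
open scoped BigOperators

open Finset

lemma sum_exp_pos {K : ℕ} (hK : 0 < K) (z : Fin K → ℝ) : 0 < ∑ j, Real.exp (z j) := by
  haveI : Nonempty (Fin K) := Fin.pos_iff_nonempty.mp hK
  exact Finset.sum_pos (fun j _ => Real.exp_pos _) univ_nonempty

lemma softmax_sum_one {K : ℕ} (hK : 0 < K) (z : Fin K → ℝ) : ∑ k, softmax z k = 1 := by
  simp only [softmax, ← Finset.sum_div]
  exact div_self (sum_exp_pos hK z).ne'

lemma klFin_eq {K : ℕ} (hK : 0 < K) (u v : Fin K → ℝ) :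
    klFin (softmax u) (softmax v)
      = Real.log (∑ k, Real.exp (v k)) - Real.log (∑ k, Real.exp (u k))
        - ∑ k, softmax u k * (v k - u k) := by
  have h1 : ∀ k, softmax u k * Real.log (softmax u k / softmax v k)
      = softmax u k * ((u k - v k) + (Real.log (∑ j, Real.exp (v j)) - Real.log (∑ j, Real.exp (u j)))) := by
    intro k
    congr 1
    rw [softmax, softmax, div_div_div_comm]
    rw [Real.log_div (by positivity) (div_ne_zero (sum_exp_pos hK u).ne' (sum_exp_pos hK v).ne'),
      Real.log_div (Real.exp_ne_zero _) (Real.exp_ne_zero _),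
      Real.log_exp, Real.log_exp, Real.log_div (sum_exp_pos hK u).ne' (sum_exp_pos hK v).ne']
    ring
  rw [klFin]
  simp only [h1, mul_add, Finset.sum_add_distrib, ← Finset.sum_mul, softmax_sum_one hK]
  have h2 : (∑ x, softmax u x * (u x - v x)) + ∑ k, softmax u k * (v k - u k) = 0 := by
    rw [← Finset.sum_add_distrib]
    rw [Finset.sum_eq_zero]
    intro k _; ring
  linarith

lemma klFin_abs_le {K : ℕ} (hK : 0 < K) {B : ℝ} (u v : Fin K → ℝ)
    (hu : ∀ k, |u k| ≤ B) (hv : ∀ k, |v k| ≤ B) :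
    |klFin (softmax u) (softmax v)| ≤ 4 * B := by
  rw [klFin_eq hK u v]
  have hsm_nn : ∀ k, 0 ≤ softmax u k :=
    fun k => div_nonneg (Real.exp_pos _).le (sum_exp_pos hK u).le
  have h1 : |∑ k, softmax u k * (v k - u k)| ≤ 2*B := by
    calc |∑ k, softmax u k * (v k - u k)| ≤ ∑ k, |softmax u k * (v k - u k)| :=
        Finset.abs_sum_le_sum_abs _ _
      _ ≤ ∑ k, softmax u k * (2*B) := by
          apply Finset.sum_le_sum
          intro k _
          rw [abs_mul, abs_of_nonneg (hsm_nn k)]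
          apply mul_le_mul_of_nonneg_left _ (hsm_nn k)
          calc |v k - u k| ≤ |v k| + |u k| := abs_sub _ _
            _ ≤ B + B := add_le_add (hv k) (hu k)
            _ = 2*B := by ring
      _ = 2*B := by rw [← Finset.sum_mul, softmax_sum_one hK, one_mul]
  have hlog : ∀ (a b : Fin K → ℝ), (∀ k, |a k| ≤ B) → (∀ k, |b k| ≤ B) →
      Real.log (∑ k, Real.exp (a k)) ≤ Real.log (∑ k, Real.exp (b k)) + 2*B := by
    intro a b ha hb
    have hsum : ∑ k, Real.exp (a k) ≤ Real.exp (2*B) * ∑ k, Real.exp (b k) := by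
      rw [Finset.mul_sum]
      apply Finset.sum_le_sum
      intro k _
      rw [← Real.exp_add]
      apply Real.exp_le_exp.mpr
      linarith [(abs_le.mp (ha k)).2, (abs_le.mp (hb k)).1]
    calc Real.log (∑ k, Real.exp (a k)) ≤ Real.log (Real.exp (2*B) * ∑ k, Real.exp (b k)) :=
        Real.log_le_log (sum_exp_pos hK a) hsum
      _ = Real.log (∑ k, Real.exp (b k)) + 2*B := by
        rw [Real.log_mul (Real.exp_ne_zero _) (sum_exp_pos hK b).ne', Real.log_exp]
        ring
  have h2a := hlog v u hv hu
  have h2b := hlog u v hu hv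
  have h1' := abs_le.mp h1
  rw [abs_le]
  constructor <;> [nlinarith [h1'.1, h1'.2, h2a, h2b]; nlinarith [h1'.1, h1'.2, h2a, h2b]]

lemma sum_sq_shift {K : ℕ} (Δ : Fin K → ℝ) (a : ℝ) :
    ∑ k, (Δ k - a)^2 = ∑ k, Δ k^2 - 2*a*(∑ k, Δ k) + K*a^2 := by
  rw [Finset.sum_congr rfl (fun k _ => (by ring : (Δ k - a)^2 = Δ k^2 - 2*a*Δ k + a^2))]
  rw [Finset.sum_add_distrib, Finset.sum_sub_distrib, ← Finset.mul_sum, Finset.sum_const,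
    Finset.card_univ, Fintype.card_fin, nsmul_eq_mul]

lemma min_shift (Kr : ℝ) (hKr : 0 ≤ Kr) (S2 m M : ℝ) :
    S2 - 2*m*(Kr*m) + Kr*m^2 ≤ S2 - 2*M*(Kr*m) + Kr*M^2 := by
  nlinarith [mul_nonneg hKr (sq_nonneg (M - m))]

set_option maxHeartbeats 1000000 in
lemma slate_bound {K : ℕ} (hK : 0 < K) {B : ℝ} (u v : Fin K → ℝ)
    (hu : ∀ k, |u k| ≤ B) (hv : ∀ k, |v k| ≤ B) :
    Real.exp (-(2*B)) / K / 2 * ∑ k, (v k - u k - (∑ j, (v j - u j)) / K) ^ 2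
      ≤ klFin (softmax u) (softmax v) := by
  set Δ : Fin K → ℝ := fun k => v k - u k with hΔ
  set s0 : ℝ → ℝ := fun t => ∑ k, Real.exp (u k + t * Δ k) with hs0def
  set s1 : ℝ → ℝ := fun t => ∑ k, Δ k * Real.exp (u k + t * Δ k) with hs1def
  set s2 : ℝ → ℝ := fun t => ∑ k, Δ k ^ 2 * Real.exp (u k + t * Δ k) with hs2def
  set Q : ℝ := ∑ k, (Δ k - (∑ j, Δ j)/K)^2 with hQdef
  set c : ℝ := Real.exp (-(2*B)) / K * Q with hcdef
  have hKpos : (0:ℝ) < K := Nat.cast_pos.mpr hK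
  have hQnn : 0 ≤ Q := Finset.sum_nonneg fun k _ => sq_nonneg _
  have hs0pos : ∀ t, 0 < s0 t := fun t => sum_exp_pos hK _
  have hexp : ∀ (k : Fin K) (t : ℝ), HasDerivAt (fun t => Real.exp (u k + t * Δ k))
      (Δ k * Real.exp (u k + t * Δ k)) t := by
    intro k t
    have h := ((((hasDerivAt_mul_const (Δ k)) :
        HasDerivAt (fun x : ℝ => x * Δ k) (Δ k) t)).const_add (u k)).exp
    simpa [mul_comm] using h
  have hs0 : ∀ t, HasDerivAt s0 (s1 t) t := fun t => HasDerivAt.fun_sum (fun k _ => hexp k t)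
  have hs1 : ∀ t, HasDerivAt s1 (s2 t) t := by
    intro t
    apply HasDerivAt.fun_sum
    intro k _
    have h := (hexp k t).const_mul (Δ k)
    exact h.congr_deriv (by ring)
  have hF1 : ∀ t, HasDerivAt (fun t => s1 t / s0 t)
      ((s2 t * s0 t - s1 t * s1 t) / (s0 t)^2) t :=
    fun t => (hs1 t).div (hs0 t) (hs0pos t).ne'
  -- the key second-derivative lower bound
  have key : ∀ t ∈ Set.Icc (0:ℝ) 1, c ≤ (s2 t * s0 t - s1 t * s1 t) / (s0 t)^2 := by
    intro t ht
    have hz : ∀ k, |u k + t * Δ k| ≤ B := by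
      intro k
      have he : u k + t * Δ k = (1 - t) * u k + t * v k := by rw [hΔ]; ring
      rw [he]
      calc |(1-t) * u k + t * v k| ≤ |(1-t) * u k| + |t * v k| := abs_add_le _ _
        _ = (1-t) * |u k| + t * |v k| := by
            rw [abs_mul, abs_mul, abs_of_nonneg (by linarith [ht.2] : (0:ℝ) ≤ 1 - t),
              abs_of_nonneg ht.1]
        _ ≤ (1-t) * B + t * B := by
            have h1 := hu k; have h2 := hv k
            have := ht.1; have := ht.2
            nlinarith
        _ = B := by ring
    have hlb : ∀ k, Real.exp (-B) ≤ Real.exp (u k + t * Δ k) :=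
      fun k => Real.exp_le_exp.mpr (neg_le_of_abs_le (hz k))
    have hub : s0 t ≤ K * Real.exp B := by
      calc s0 t ≤ ∑ _k : Fin K, Real.exp B :=
            Finset.sum_le_sum fun k _ => Real.exp_le_exp.mpr (le_of_abs_le (hz k))
        _ = K * Real.exp B := by
            rw [Finset.sum_const, Finset.card_univ, Fintype.card_fin, nsmul_eq_mul]
    have hm : ∀ k, Real.exp (-(2*B)) / K ≤ Real.exp (u k + t * Δ k) / s0 t := by
      intro k
      rw [div_le_div_iff₀ hKpos (hs0pos t)]
      calc Real.exp (-(2*B)) * s0 t ≤ Real.exp (-(2*B)) * (K * Real.exp B) :=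
            mul_le_mul_of_nonneg_left hub (Real.exp_pos _).le
        _ = K * Real.exp (-(2*B) + B) := by rw [Real.exp_add]; ring
        _ = K * Real.exp (-B) := by rw [show -(2*B)+B = -B by ring]
        _ ≤ Real.exp (u k + t * Δ k) * K := by
            rw [mul_comm]
            exact mul_le_mul_of_nonneg_right (hlb k) hKpos.le
    set r : Fin K → ℝ := fun k => Real.exp (u k + t * Δ k) / s0 t with hrdef
    set μ : ℝ := s1 t / s0 t with hμdef
    have hr1 : ∑ k, r k = 1 := by
      rw [hrdef, ← Finset.sum_div]
      exact div_self (hs0pos t).ne'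
    have hrμ : ∑ k, r k * Δ k = μ := by
      show _ = (∑ k, Δ k * Real.exp (u k + t * Δ k)) / s0 t
      rw [Finset.sum_div]
      exact Finset.sum_congr rfl fun k _ => by show Real.exp _ / _ * _ = _; ring
    have hrsq : ∑ k, r k * Δ k ^ 2 = s2 t / s0 t := by
      show _ = (∑ k, Δ k ^ 2 * Real.exp (u k + t * Δ k)) / s0 t
      rw [Finset.sum_div]
      exact Finset.sum_congr rfl fun k _ => by show Real.exp _ / _ * _ = _; ring
    have hgoal_eq : (s2 t * s0 t - s1 t * s1 t) / (s0 t)^2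
        = (∑ k, r k * Δ k ^ 2) - μ^2 := by
      rw [hrsq, hμdef]
      field_simp [(hs0pos t).ne']
    clear_value r μ
    have hvar : (∑ k, r k * Δ k ^ 2) - μ^2 = ∑ k, r k * (Δ k - μ)^2 := by
      rw [Finset.sum_congr rfl (fun k _ =>
        (by ring : r k * (Δ k - μ)^2 = r k * Δ k^2 - 2*μ*(r k * Δ k) + μ^2 * r k))]
      rw [Finset.sum_add_distrib, Finset.sum_sub_distrib, ← Finset.mul_sum, ← Finset.mul_sum,
        hrμ, hr1]
      ring
    have h3 : Q ≤ ∑ k, (Δ k - μ)^2 := by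
      rw [hQdef, sum_sq_shift, sum_sq_shift]
      have hKm : (K:ℝ) * ((∑ j, Δ j) / (K:ℝ)) = ∑ j, Δ j := by
        field_simp
      have h := min_shift (K:ℝ) hKpos.le (∑ k, Δ k ^ 2) ((∑ j, Δ j)/(K:ℝ)) μ
      rw [hKm] at h
      exact h
    have hsum_ge : Real.exp (-(2*B))/K * ∑ k, (Δ k - μ)^2 ≤ ∑ k, r k * (Δ k - μ)^2 := by
      rw [Finset.mul_sum]
      apply Finset.sum_le_sum
      intro k _
      simp only [hrdef]
      exact mul_le_mul_of_nonneg_right (hm k) (sq_nonneg _)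
    have hQμ : Real.exp (-(2*B))/K * Q ≤ Real.exp (-(2*B))/K * ∑ k, (Δ k - μ)^2 :=
      mul_le_mul_of_nonneg_left h3 (by positivity)
    rw [hgoal_eq, hvar, hcdef]
    linarith
  -- monotonicity endgame
  have hcnn : 0 ≤ c := by rw [hcdef]; positivity
  have hdF2 : ∀ x : ℝ, HasDerivAt (fun t => s1 t / s0 t - c * t)
      ((s2 x * s0 x - s1 x * s1 x) / (s0 x)^2 - c) x := by
    intro x
    exact (hF1 x).sub (by simpa using (hasDerivAt_id x).const_mul c)
  have hmono1 : MonotoneOn (fun t => s1 t / s0 t - c * t) (Set.Icc 0 1) := by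
    apply monotoneOn_of_hasDerivWithinAt_nonneg (convex_Icc 0 1)
      (f' := fun x => (s2 x * s0 x - s1 x * s1 x) / (s0 x)^2 - c)
    · exact fun x _ => (hdF2 x).continuousAt.continuousWithinAt
    · exact fun x _ => (hdF2 x).hasDerivWithinAt
    · intro x hx
      rw [interior_Icc] at hx
      have h := key x (Set.mem_Icc_of_Ioo hx)
      linarith
  have hA : ∀ t ∈ Set.Icc (0:ℝ) 1, s1 0 / s0 0 + c * t ≤ s1 t / s0 t := by
    intro t ht
    have h : s1 0 / s0 0 - c * 0 ≤ s1 t / s0 t - c * t :=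
      hmono1 (Set.left_mem_Icc.mpr zero_le_one) ht ht.1
    linarith
  have hdG : ∀ x : ℝ, HasDerivAt (fun t => Real.log (s0 t) - s1 0 / s0 0 * t - c * (t^2/2))
      (s1 x / s0 x - s1 0 / s0 0 - c * x) x := by
    intro x
    have h1 : HasDerivAt (fun t => Real.log (s0 t)) (s1 x / s0 x) x := (hs0 x).log (hs0pos x).ne'
    have h2 : HasDerivAt (fun t : ℝ => s1 0 / s0 0 * t) (s1 0 / s0 0) x := by
      simpa using (hasDerivAt_id x).const_mul (s1 0 / s0 0)
    have h3 : HasDerivAt (fun t : ℝ => c * (t^2/2)) (c * x) x := by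
      have h := ((hasDerivAt_pow 2 x).div_const 2).const_mul c
      exact h.congr_deriv (by rw [show (2:ℕ) - 1 = 1 from rfl, pow_one]; push_cast; ring)
    exact (h1.sub h2).sub h3
  have hmono2 : MonotoneOn (fun t => Real.log (s0 t) - s1 0 / s0 0 * t - c * (t^2/2))
      (Set.Icc 0 1) := by
    apply monotoneOn_of_hasDerivWithinAt_nonneg (convex_Icc 0 1)
      (f' := fun x => s1 x / s0 x - s1 0 / s0 0 - c * x)
    · exact fun x _ => (hdG x).continuousAt.continuousWithinAt
    · exact fun x _ => (hdG x).hasDerivWithinAt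
    · intro x hx
      rw [interior_Icc] at hx
      have h := hA x (Set.mem_Icc_of_Ioo hx)
      linarith
  have hG01 : Real.log (s0 0) - s1 0 / s0 0 * 0 - c * (0^2/2)
      ≤ Real.log (s0 1) - s1 0 / s0 0 * 1 - c * (1^2/2) :=
    hmono2 (Set.left_mem_Icc.mpr zero_le_one) (Set.right_mem_Icc.mpr zero_le_one) zero_le_one
  have e0 : s0 0 = ∑ k, Real.exp (u k) := by
    rw [hs0def]; exact Finset.sum_congr rfl fun k _ => by norm_num
  have e1 : s0 1 = ∑ k, Real.exp (v k) := by
    rw [hs0def]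
    exact Finset.sum_congr rfl fun k _ => by rw [show u k + 1 * Δ k = v k by rw [hΔ]; ring]
  have e2 : ∑ k, softmax u k * (v k - u k) = s1 0 / s0 0 := by
    have h10 : s1 0 = ∑ k, (v k - u k) * Real.exp (u k) := by
      rw [hs1def]
      exact Finset.sum_congr rfl fun k _ => by rw [hΔ]; norm_num
    rw [h10, e0, Finset.sum_div]
    exact Finset.sum_congr rfl fun k _ => by rw [softmax]; ring
  have hgoal : Real.exp (-(2*B)) / K / 2 * ∑ k, (v k - u k - (∑ j, (v j - u j))/K)^2
      = c / 2 := by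
    rw [hcdef, hQdef]
    simp only [hΔ]
    ring
  rw [hgoal, klFin_eq hK u v, ← e0, ← e1, e2]
  norm_num at hG01
  linarith

lemma bdd_integrable {β : Type*} [MeasurableSpace β] {μ : Measure β} [IsFiniteMeasure μ]
    {f : β → ℝ} (hm : AEStronglyMeasurable f μ) {C : ℝ} (h : ∀ x, |f x| ≤ C) :
    Integrable f μ :=
  ⟨hm, HasFiniteIntegral.of_bounded (C := C)
    (ae_of_all _ fun x => by simpa [Real.norm_eq_abs] using h x)⟩

lemma Qfun_eq {K : ℕ} (hK : 0 < K) (x : Fin K → ℝ) :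
    ∑ k, (x k - (∑ j, x j)/K)^2 = ∑ k, x k^2 - (∑ i, ∑ j, x i * x j)/K := by
  rw [sum_sq_shift, ← Finset.sum_mul_sum]
  have hKne : (K:ℝ) ≠ 0 := Nat.cast_ne_zero.mpr hK.ne'
  field_simp
  ring

set_option maxHeartbeats 1000000 in
theorem stmt_5 {α : Type*} [MeasurableSpace α] (q : Measure α) [IsProbabilityMeasure q]
    {K : ℕ} (hK : 2 ≤ K) (B : ℝ) (hB : 0 ≤ B)
    (Sstar S : α → ℝ) (hSstar : Measurable Sstar) (hS : Measurable S)
    (hbS : ∀ a, |Sstar a| ≤ B) (hbS' : ∀ a, |S a| ≤ B) :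
    (Real.exp (-(2 * B)) / 2) * (((K : ℝ) - 1) / (K : ℝ)) *
        (∫ a, (S a - Sstar a) ^ 2 ∂q - (∫ a, (S a - Sstar a) ∂q) ^ 2)
      ≤ ∫ A, klFin (softmax (fun k => Sstar (A k))) (softmax (fun k => S (A k)))
          ∂(Measure.pi fun _ : Fin K => q) := by
  have hK0 : 0 < K := lt_of_lt_of_le two_pos hK
  haveI : Nonempty (Fin K) := Fin.pos_iff_nonempty.mp hK0
  set P : Measure (Fin K → α) := Measure.pi fun _ : Fin K => q with hPdef
  haveI : IsProbabilityMeasure P := by rw [hPdef]; infer_instance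
  set Δ : α → ℝ := fun a => S a - Sstar a with hΔdef
  have hΔm : Measurable Δ := hS.sub hSstar
  have hΔb : ∀ a, |Δ a| ≤ 2*B := by
    intro a
    calc |Δ a| ≤ |S a| + |Sstar a| := abs_sub _ _
      _ ≤ B + B := add_le_add (hbS' a) (hbS a)
      _ = 2*B := by ring
  -- product integral machinery
  letI : MeasureSpace α := ⟨q⟩
  haveI : SigmaFinite (volume : Measure α) := inferInstanceAs (SigmaFinite q)
  have prodInt : ∀ f : Fin K → α → ℝ,
      ∫ A, ∏ k, f k (A k) ∂P = ∏ k, ∫ a, f k a ∂q :=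
    fun f => MeasureTheory.integral_fintype_prod_eq_prod f
  set c2 : ℝ := ∫ a, Δ a^2 ∂q with hc2
  set c1 : ℝ := ∫ a, Δ a ∂q with hc1
  have sq_coord : ∀ k : Fin K, ∫ A, Δ (A k)^2 ∂P = c2 := by
    intro k
    have e : ∫ A, Δ (A k)^2 ∂P
        = ∏ j, ∫ a, (if j = k then (fun a => Δ a^2) else (fun _ => (1:ℝ))) a ∂q := by
      rw [← prodInt]
      apply integral_congr_ae
      apply ae_of_all
      intro A
      show Δ (A k)^2 = ∏ j, (if j = k then (fun a => Δ a^2) else (fun _ => (1:ℝ))) (A j)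
      have h1 : ∀ j, (if j = k then (fun a => Δ a^2) else fun _ => (1:ℝ)) (A j)
          = if j = k then Δ (A j)^2 else 1 := fun j => by split_ifs <;> rfl
      rw [Finset.prod_congr rfl fun j _ => h1 j, Finset.prod_ite_eq']
      simp
    rw [e]
    have hif : ∀ j, (∫ a, (if j = k then (fun a => Δ a^2) else (fun _ => (1:ℝ))) a ∂q)
        = if j = k then c2 else 1 := by
      intro j; split_ifs <;> simp [hc2]
    simp [hif, Finset.prod_ite_eq']
  have cross : ∀ i j : Fin K, i ≠ j → ∫ A, Δ (A i) * Δ (A j) ∂P = c1 * c1 := by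
    intro i j hij
    have e : ∫ A, Δ (A i) * Δ (A j) ∂P
        = ∏ k, ∫ a, (if k = i ∨ k = j then Δ else (fun _ => (1:ℝ))) a ∂q := by
      rw [← prodInt]
      apply integral_congr_ae
      apply ae_of_all
      intro A
      show Δ (A i) * Δ (A j) = ∏ k, (if k = i ∨ k = j then Δ else (fun _ => (1:ℝ))) (A k)
      have h1 : ∀ k : Fin K, (if k = i ∨ k = j then Δ else (fun _ => (1:ℝ))) (A k)
          = if k ∈ ({i, j} : Finset (Fin K)) then Δ (A k) else 1 := by
        intro k
        by_cases h : k = i ∨ k = j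
        · rw [if_pos h, if_pos (by simp [h])]
        · push_neg at h
          rw [if_neg (by tauto), if_neg (by simp [h.1, h.2])]
      rw [Finset.prod_congr rfl fun k _ => h1 k, Finset.prod_ite_mem, Finset.univ_inter,
        Finset.prod_pair hij]
    rw [e]
    have hif : ∀ k : Fin K, (∫ a, (if k = i ∨ k = j then Δ else (fun _ => (1:ℝ))) a ∂q)
        = if k ∈ ({i, j} : Finset (Fin K)) then c1 else 1 := by
      intro k
      by_cases h : k = i ∨ k = j
      · simp [h, Finset.mem_insert, Finset.mem_singleton, hc1]
      · push_neg at h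
        simp [h.1, h.2]
    rw [Finset.prod_congr rfl fun k _ => hif k, Finset.prod_ite_mem, Finset.univ_inter,
      Finset.prod_pair hij]
  -- integrability of pieces
  have hevalm : ∀ k : Fin K, Measurable fun A : Fin K → α => Δ (A k) :=
    fun k => hΔm.comp (measurable_pi_apply k)
  have int_sq : ∀ k : Fin K, Integrable (fun A : Fin K → α => Δ (A k)^2) P := by
    intro k
    apply bdd_integrable ((hevalm k).pow_const 2).aestronglyMeasurable (C := (2*B)^2)
    intro A
    rw [abs_pow]
    exact pow_le_pow_left₀ (abs_nonneg _) (hΔb (A k)) 2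
  have int_cross : ∀ i j : Fin K, Integrable (fun A : Fin K → α => Δ (A i) * Δ (A j)) P := by
    intro i j
    apply bdd_integrable ((hevalm i).mul (hevalm j)).aestronglyMeasurable (C := (2*B)*(2*B))
    intro A
    rw [Pi.mul_apply, abs_mul]
    exact mul_le_mul (hΔb _) (hΔb _) (abs_nonneg _) (by linarith)
  have int_sum_sq : Integrable (fun A : Fin K → α => ∑ k, Δ (A k)^2) P :=
    integrable_finset_sum _ (fun k _ => int_sq k)
  have int_dsum : Integrable (fun A : Fin K → α => ∑ i, ∑ j, Δ (A i) * Δ (A j)) P :=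
    integrable_finset_sum _ fun i _ => integrable_finset_sum _ fun j _ => int_cross i j
  have int_sumsq_val : ∫ A, (∑ k, Δ (A k)^2) ∂P = K * c2 := by
    rw [integral_finset_sum _ (fun k _ => int_sq k),
      Finset.sum_congr rfl fun k _ => sq_coord k, Finset.sum_const, Finset.card_univ,
      Fintype.card_fin, nsmul_eq_mul]
  have int_dsum_val : ∫ A, (∑ i, ∑ j, Δ (A i) * Δ (A j)) ∂P
      = K * c2 + ((K:ℝ)*((K:ℝ)-1)) * (c1*c1) := by
    rw [integral_finset_sum _ (fun i _ => integrable_finset_sum _ fun j _ => int_cross i j)]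
    have hrow : ∀ i : Fin K, ∫ A, (∑ j, Δ (A i) * Δ (A j)) ∂P = c2 + ((K:ℝ)-1)*(c1*c1) := by
      intro i
      rw [integral_finset_sum _ (fun j _ => int_cross i j)]
      have hval : ∀ j : Fin K, ∫ A, Δ (A i) * Δ (A j) ∂P
          = (if i = j then c2 - c1*c1 else 0) + c1*c1 := by
        intro j
        by_cases h : i = j
        · subst h
          rw [if_pos rfl]
          have e : (fun A : Fin K → α => Δ (A i) * Δ (A i)) = fun A => Δ (A i)^2 := by
            funext A; ring
          rw [e, sq_coord i]; ring
        · rw [if_neg h, cross i j h]; ring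
      rw [Finset.sum_congr rfl fun j _ => hval j, Finset.sum_add_distrib, Finset.sum_ite_eq,
        Finset.sum_const, Finset.card_univ, Fintype.card_fin, nsmul_eq_mul]
      simp only [Finset.mem_univ, if_true]
      ring
    rw [Finset.sum_congr rfl fun i _ => hrow i, Finset.sum_const, Finset.card_univ,
      Fintype.card_fin, nsmul_eq_mul]
    ring
  -- integral of the lower bound
  have e : (fun A : Fin K → α => ∑ k, (Δ (A k) - (∑ j, Δ (A j))/K)^2)
      = fun A => (∑ k, Δ (A k)^2) - (∑ i, ∑ j, Δ (A i) * Δ (A j))/K := by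
    funext A; exact Qfun_eq hK0 (fun k => Δ (A k))
  have hQint : ∫ A, (Real.exp (-(2*B)) / K / 2) * ∑ k, (Δ (A k) - (∑ j, Δ (A j))/K)^2 ∂P
      = Real.exp (-(2*B)) / K / 2 * (((K:ℝ)-1) * (c2 - c1*c1)) := by
    rw [integral_const_mul]
    congr 1
    rw [e, integral_sub int_sum_sq (int_dsum.div_const K), integral_div, int_sumsq_val,
      int_dsum_val]
    have hKne : (K:ℝ) ≠ 0 := Nat.cast_ne_zero.mpr hK0.ne'
    field_simp
    ring
  have int_lower : Integrable
      (fun A : Fin K → α => (Real.exp (-(2*B)) / K / 2) * ∑ k, (Δ (A k) - (∑ j, Δ (A j))/K)^2) P := by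
    have h := ((int_sum_sq.sub (int_dsum.div_const K)).const_mul (Real.exp (-(2*B)) / K / 2))
    apply h.congr
    apply ae_of_all
    intro A
    simp only [Pi.sub_apply]
    rw [Qfun_eq hK0 (fun k => Δ (A k))]
  have hbd : ∀ A : Fin K → α,
      |klFin (softmax fun k => Sstar (A k)) (softmax fun k => S (A k))| ≤ 4*B :=
    fun A => klFin_abs_le hK0 _ _ (fun k => hbS (A k)) (fun k => hbS' (A k))
  have hklm : Measurable
      (fun A : Fin K → α => klFin (softmax fun k => Sstar (A k)) (softmax fun k => S (A k))) := by
    unfold klFin softmax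
    apply Finset.measurable_sum
    intro k _
    have m1 : ∀ (g : α → ℝ), Measurable g → Measurable fun A : Fin K → α =>
        Real.exp (g (A k)) / ∑ j, Real.exp (g (A j)) := by
      intro g hg
      apply Measurable.div
      · exact Real.measurable_exp.comp (hg.comp (measurable_pi_apply k))
      · exact Finset.measurable_sum _ fun j _ =>
          Real.measurable_exp.comp (hg.comp (measurable_pi_apply j))
    exact (m1 Sstar hSstar).mul (((m1 Sstar hSstar).div (m1 S hS)).log)
  have int_kl : Integrable
      (fun A : Fin K → α => klFin (softmax fun k => Sstar (A k)) (softmax fun k => S (A k))) P :=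
    bdd_integrable hklm.aestronglyMeasurable hbd
  -- conclude
  have hpt : ∀ A : Fin K → α,
      (Real.exp (-(2*B)) / K / 2) * ∑ k, (Δ (A k) - (∑ j, Δ (A j))/K)^2
        ≤ klFin (softmax fun k => Sstar (A k)) (softmax fun k => S (A k)) := by
    intro A
    have h := slate_bound hK0 (fun k => Sstar (A k)) (fun k => S (A k))
      (fun k => hbS (A k)) (fun k => hbS' (A k))
    simpa only [hΔdef] using h
  have hle := integral_mono int_lower int_kl hpt
  rw [hQint] at hle
  have hgoal : (Real.exp (-(2 * B)) / 2) * (((K : ℝ) - 1) / (K : ℝ)) *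
      (∫ a, (S a - Sstar a) ^ 2 ∂q - (∫ a, (S a - Sstar a) ∂q) ^ 2)
      = Real.exp (-(2*B)) / K / 2 * (((K:ℝ)-1) * (c2 - c1*c1)) := by
    have hc2' : c2 = ∫ a, (S a - Sstar a)^2 ∂q := by rw [hc2]
    have hc1' : c1 = ∫ a, (S a - Sstar a) ∂q := by rw [hc1]
    rw [hc2', hc1']
    ring
  rw [hgoal]
  exact hle
end
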